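/- For every countable linear order L there exists a level-1 tree P such that L is order-isomorphic to (P, <_BK), the Brouwer–Kleene order restricted to P. -/

import Mathlib

noncomputable section

/-- Brouwer–Kleene strict order on finite sequences, relative to a strict order `lt`
on entries: `s <_BK t` iff `s` properly extends `t`, or at the least position where
both are defined and they differ, the entry of `s` is smaller; `[]` is greatest. -/
def BKltBy {α : Type*} (lt : α → α → Prop) : List α → List α → Prop
  | [], _ => False
  | _ :: _, [] => True
  | a :: s, b :: t => lt a b ∨ (a = b ∧ BKltBy lt s t)

/-- The Brouwer–Kleene order on finite sequences of natural numbers. -/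
def BKlt : List ℕ → List ℕ → Prop := BKltBy (· < ·)

/-- A level-1 tree: a set of nonempty finite sequences of naturals such that whenever
`s⌢(n) ∈ P`: if `s ≠ []` then `s ∈ P`, and `s⌢(m) ∈ P` for every `m < n`. -/
def IsLevel1Tree (P : Set (List ℕ)) : Prop :=
  (∀ s ∈ P, s ≠ []) ∧
  ∀ (s : List ℕ) (n : ℕ), s ++ [n] ∈ P →
    (s ≠ [] → s ∈ P) ∧ ∀ m < n, s ++ [m] ∈ P

/-- A level-1 tree is regular iff the sequence `(1)` is not in it. -/
def Regular1 (P : Set (List ℕ)) : Prop := ([1] : List ℕ) ∉ P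

/-- `P` is Π¹₁-wellfounded: there is no infinite branch through `P`. -/
def Pi11WF (P : Set (List ℕ)) : Prop :=
  ¬ ∃ x : ℕ → ℕ, ∀ n : ℕ, 0 < n → (List.ofFn fun i : Fin n => x i) ∈ P

/-- `rep(P)`: the pair `(p, none)` codes the element `(p)` and `(p, some n)` codes
`(p, n)`. -/
def Rep1 (P : Set (List ℕ)) : Set (List ℕ × Option ℕ) := {x | x.1 ∈ P}

def optNatLt : Option ℕ → Option ℕ → Prop
  | some n, some m => n < m
  | some _, none => True
  | _, _ => False

/-- The order `<^P` on `rep(P)`. -/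
def Rep1lt (x y : List ℕ × Option ℕ) : Prop :=
  BKlt x.1 y.1 ∨ (x.1 = y.1 ∧ optNatLt x.2 y.2)

/-- The first uncountable ordinal. -/
def omega1 : Ordinal := (Cardinal.aleph 1).ord

/-- The tuple `(f p)_{p ∈ P}` respects the level-1 tree `P`: each entry is a countable
limit ordinal and `p ↦ f p` is order preserving from `(P, <_BK)` to the ordinals. -/
def Respects1 (P : Set (List ℕ)) (f : List ℕ → Ordinal) : Prop :=
  (∀ p ∈ P, f p < omega1 ∧ Order.IsSuccLimit (f p)) ∧
  ∀ p ∈ P, ∀ q ∈ P, BKlt p q → f p < f q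

/-- `σ` factors `(P, W)`: `σ(∅) = ∅` and `σ` preserves the Brouwer–Kleene order. -/
def Factors (P W : Set (List ℕ)) (σ : List ℕ → List ℕ) : Prop :=
  σ [] = [] ∧ (∀ p ∈ P, σ p ∈ insert ([] : List ℕ) W) ∧
  ∀ s ∈ insert ([] : List ℕ) P, ∀ t ∈ insert ([] : List ℕ) P,
    BKlt s t → BKlt (σ s) (σ t)

/-- Partial level ≤1 tree `(P, t)`; `t = none` codes the value `-1`. -/
def IsPartialLevelLe1Tree (P : Set (List ℕ)) (t : Option (List ℕ)) : Prop :=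
  P.Finite ∧ IsLevel1Tree P ∧ Regular1 P ∧
  (match t with
   | none => P.Nonempty
   | some s => s ∉ P ∧ IsLevel1Tree (insert s P) ∧ Regular1 (insert s P))

/-- The tuple coded by `f` on `P` together with the value `v` at `t` respects the
partial level ≤1 tree `(P, t)`. -/
def RespectsP1 (P : Set (List ℕ)) (t : Option (List ℕ)) (f : List ℕ → Ordinal)
    (v : Ordinal) : Prop :=
  match t with
  | none => Respects1 P f ∧ v < Ordinal.omega0
  | some s => Respects1 P f ∧
      Respects1 (insert s P) (fun p => if p = s then v else f p)

/-- A level-2 tree of uniform cofinalities. -/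
structure Level2Tree where
  dom : Set (List (List ℕ))
  tr : List (List ℕ) → Set (List ℕ)
  nd : List (List ℕ) → Option (List ℕ)
  nil_mem : [] ∈ dom
  take_mem : ∀ q ∈ dom, ∀ n : ℕ, q.take n ∈ dom
  lvl1 : ∀ q ∈ dom, IsLevel1Tree {a : List ℕ | q ++ [a] ∈ dom}
  tr_nil : tr [] = ∅
  nd_nil : nd [] = some [0]
  ptree : ∀ q ∈ dom, IsPartialLevelLe1Tree (tr q) (nd q)
  compl : ∀ q ∈ dom, ∀ l : ℕ, l < q.length →
    ∃ s : List ℕ, nd (q.take l) = some s ∧ tr (q.take (l + 1)) = insert s (tr (q.take l))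

/-- The node `Q_node(q)`, read as an element of `ℕ^{<ω}`. -/
def Level2Tree.ndVal (Q : Level2Tree) (q : List (List ℕ)) : List ℕ := (Q.nd q).getD []

/-- The interleaved sequence `ᾱ ⊕ q`. -/
def Level2Tree.oplus (Q : Level2Tree) (f : List ℕ → Ordinal) (q : List (List ℕ)) :
    List (Ordinal × Option (List ℕ)) :=
  (List.range q.length).map fun i => (f (Q.ndVal (q.take i)), some (q.getD i []))

/-- The interleaved sequence `ᾱ ⊕ q⌢(-1)`, where `v` is the entry of the tuple at
the node `Q_node(q)`. -/
def Level2Tree.oplusNeg (Q : Level2Tree) (f : List ℕ → Ordinal) (v : Ordinal)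
    (q : List (List ℕ)) : List (Ordinal × Option (List ℕ)) :=
  Q.oplus f q ++ [(v, none)]

def optNodeLt : Option (List ℕ) → Option (List ℕ) → Prop
  | none, some _ => True
  | some s, some t => BKlt s t
  | _, _ => False

def entryLt (x y : Ordinal × Option (List ℕ)) : Prop :=
  x.1 < y.1 ∨ (x.1 = y.1 ∧ optNodeLt x.2 y.2)

/-- The order `<^{²Q}` on interleaved sequences. -/
def Rep2lt : List (Ordinal × Option (List ℕ)) → List (Ordinal × Option (List ℕ)) → Prop :=
  BKltBy entryLt

/-- `rep(²Q)`. -/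
def Level2Tree.rep (Q : Level2Tree) : Set (List (Ordinal × Option (List ℕ))) :=
  {x | (∃ q ∈ Q.dom, ∃ f, Respects1 (Q.tr q) f ∧ x = Q.oplus f q) ∨
       (∃ q ∈ Q.dom, ∃ f v, RespectsP1 (Q.tr q) (Q.nd q) f v ∧ x = Q.oplusNeg f v q)}

/-- Π¹₂-wellfoundedness of a level-2 tree. -/
def Level2Tree.Pi12WF (Q : Level2Tree) : Prop :=
  (∀ q ∈ Q.dom, Pi11WF {a : List ℕ | q ++ [a] ∈ Q.dom}) ∧
  ∀ y : ℕ → List ℕ, (∀ n : ℕ, (List.ofFn fun i : Fin n => y i) ∈ Q.dom) →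
    ¬ Pi11WF (⋃ n : ℕ, Q.tr (List.ofFn fun i : Fin n => y i))

/-- The type of elements of `rep(Q)` for a level ≤2 tree `Q`: `inl` for the level-1
part, `inr` for the level-2 part. -/
abbrev RepLe2Elt := (List ℕ × Option ℕ) ⊕ (List (Ordinal × Option (List ℕ)))

/-- `rep(Q)` for the level ≤2 tree `Q = (P, Q₂)`. -/
def RepLe2 (P : Set (List ℕ)) (Q : Level2Tree) : Set RepLe2Elt :=
  {x | match x with
       | Sum.inl a => a ∈ Rep1 P
       | Sum.inr b => b ∈ Q.rep}

/-- The order `<^Q` for a level ≤2 tree: the level-1 part comes first. -/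
def RepLe2lt : RepLe2Elt → RepLe2Elt → Prop := Sum.Lex Rep1lt Rep2lt

/-- Π¹₂-wellfoundedness of a level ≤2 tree. -/
def Pi12WFle2 (P : Set (List ℕ)) (Q : Level2Tree) : Prop :=
  Pi11WF P ∧ Q.Pi12WF

/-- The sequence of the first `n` values of `x`. -/
def prefixSeq {α : Type*} (x : ℕ → α) (n : ℕ) : List α := List.ofFn fun i : Fin n => x i

/-- `σ` is a winning strategy for Player I (who plays at even rounds) in the game
with payoff set `A`. -/
def WinningStratI (A : Set (ℕ → ℕ)) (σ : List ℕ → ℕ) : Prop :=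
  ∀ x : ℕ → ℕ, (∀ n, x (2 * n) = σ (prefixSeq x (2 * n))) → x ∈ A

/-- `σ` is a winning strategy for Player II (who plays at odd rounds). -/
def WinningStratII (A : Set (ℕ → ℕ)) (σ : List ℕ → ℕ) : Prop :=
  ∀ x : ℕ → ℕ, (∀ n, x (2 * n + 1) = σ (prefixSeq x (2 * n + 1))) → x ∉ A

/-- The Gale–Stewart game with payoff `A` is determined. -/
def GameDetermined (A : Set (ℕ → ℕ)) : Prop :=
  (∃ σ, WinningStratI A σ) ∨ (∃ σ, WinningStratII A σ)

/-- `A` is analytic: the projection of a closed subset of the plane of Baire space,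
i.e., the projection of the set of branches of a set of pairs of finite sequences. -/
def IsAnalytic (A : Set (ℕ → ℕ)) : Prop :=
  ∃ T : Set (List ℕ × List ℕ),
    A = {x | ∃ y : ℕ → ℕ, ∀ n : ℕ, (prefixSeq x n, prefixSeq y n) ∈ T}

/-- Boldface Π¹₁-determinacy: every game with coanalytic payoff is determined. -/
def BoldfacePi11Determinacy : Prop :=
  ∀ A : Set (ℕ → ℕ), IsAnalytic Aᶜ → GameDetermined A

/-- An infinite level-1 tower. -/
def IsInfLevel1Tower (P : ℕ → Set (List ℕ)) : Prop :=
  ∀ i : ℕ, IsLevel1Tree (P i) ∧ (P i).Finite ∧ (P i).ncard = i ∧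
    ∀ j : ℕ, i < j → P i ⊆ P j

/-- `o` is a limit point of the set of ordinals `E`. -/
def IsLimitPtOf (E : Set Ordinal) (o : Ordinal) : Prop :=
  (∃ e ∈ E, e < o) ∧ ∀ b < o, ∃ e ∈ E, b < e ∧ e < o

/-- `E` is a club in `ω₁`. -/
def IsClubInOmega1 (E : Set Ordinal) : Prop :=
  (∀ o ∈ E, o < omega1) ∧
  (∀ o < omega1, ∃ e ∈ E, o < e) ∧
  ∀ o < omega1, IsLimitPtOf E o → o ∈ E

/-- The tuple coded by `f` lies in `[E]^{P↑}`. -/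
def RespectsIn (E : Set Ordinal) (P : Set (List ℕ)) (f : List ℕ → Ordinal) : Prop :=
  Respects1 P f ∧ ∀ p ∈ P, f p ∈ E ∧ IsLimitPtOf E (f p)

/-- The tuple coded by `(f, v)` lies in `[E]^{(P,t)↑}`. -/
def RespectsPIn (E : Set Ordinal) (P : Set (List ℕ)) (t : Option (List ℕ))
    (f : List ℕ → Ordinal) (v : Ordinal) : Prop :=
  RespectsP1 P t f v ∧ (∀ p ∈ P, f p ∈ E ∧ IsLimitPtOf E (f p)) ∧
  (t ≠ none → v ∈ E)

/-- `rep(²Q) ↾ E`. -/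
def Level2Tree.repRestrict (Q : Level2Tree) (E : Set Ordinal) :
    Set (List (Ordinal × Option (List ℕ))) :=
  {x | (∃ q ∈ Q.dom, ∃ f, RespectsIn E (Q.tr q) f ∧ x = Q.oplus f q) ∨
       (∃ q ∈ Q.dom, ∃ f v, RespectsPIn E (Q.tr q) (Q.nd q) f v ∧ x = Q.oplusNeg f v q)}

/-- `rep(Q) ↾ E` for a level ≤2 tree `Q = (P, Q₂)`. -/
def RepLe2Restrict (P : Set (List ℕ)) (Q : Level2Tree) (E : Set Ordinal) :
    Set RepLe2Elt :=
  {x | match x with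
       | Sum.inl a => a ∈ Rep1 P
       | Sum.inr b => b ∈ Q.repRestrict E}

/-- `C` is a closed subset of `X` in the order topology of the strict linear order
`lt` on `X`: `C` contains all of its one-sided limit points in `X`. -/
def OrderClosedIn {σ : Type*} (lt : σ → σ → Prop) (X C : Set σ) : Prop :=
  (∀ v ∈ X, (∃ w ∈ C, lt w v) →
      (∀ w ∈ X, lt w v → ∃ u ∈ C, lt w u ∧ lt u v) → v ∈ C) ∧
  (∀ v ∈ X, (∃ w ∈ C, lt v w) →
      (∀ w ∈ X, lt v w → ∃ u ∈ C, lt v u ∧ lt u w) → v ∈ C)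

end


namespace Stmt3Aux

/-! ### Basic facts about the Brouwer–Kleene order -/

lemma bklt_cons_nil (a : ℕ) (s : List ℕ) : BKlt (a :: s) [] := by
  simp [BKlt, BKltBy]

lemma bklt_nil (s : List ℕ) : ¬ BKlt [] s := by
  simp [BKlt, BKltBy]

lemma bklt_cons (a b : ℕ) (s t : List ℕ) :
    BKlt (a :: s) (b :: t) ↔ a < b ∨ (a = b ∧ BKlt s t) := by
  simp [BKlt, BKltBy]

lemma bklt_nil_right {s : List ℕ} (h : s ≠ []) : BKlt s [] := by
  cases s with
  | nil => exact absurd rfl h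
  | cons a t => exact bklt_cons_nil a t

lemma bklt_irrefl : ∀ s : List ℕ, ¬ BKlt s s
  | [] => bklt_nil []
  | a :: s => by
      rw [bklt_cons]
      rintro (h | ⟨-, h⟩)
      · exact lt_irrefl a h
      · exact bklt_irrefl s h

lemma bklt_trans : ∀ a b c : List ℕ, BKlt a b → BKlt b c → BKlt a c
  | [], _, _ => fun h _ => absurd h (bklt_nil _)
  | _ :: _, [], _ => fun _ h2 => absurd h2 (bklt_nil _)
  | x :: a, y :: b, [] => fun _ _ => bklt_cons_nil x a
  | x :: a, y :: b, z :: c => by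
      rw [bklt_cons, bklt_cons, bklt_cons]
      rintro (h | ⟨rfl, h⟩) (h' | ⟨rfl, h'⟩)
      · exact Or.inl (lt_trans h h')
      · exact Or.inl h
      · exact Or.inl h'
      · exact Or.inr ⟨rfl, bklt_trans a b c h h'⟩

lemma bklt_total : ∀ s t : List ℕ, BKlt s t ∨ s = t ∨ BKlt t s
  | [], [] => Or.inr (Or.inl rfl)
  | [], b :: t => Or.inr (Or.inr (bklt_cons_nil b t))
  | a :: s, [] => Or.inl (bklt_cons_nil a s)
  | a :: s, b :: t => by
      rcases lt_trichotomy a b with h | rfl | h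
      · exact Or.inl ((bklt_cons ..).2 (Or.inl h))
      · rcases bklt_total s t with h | rfl | h
        · exact Or.inl ((bklt_cons ..).2 (Or.inr ⟨rfl, h⟩))
        · exact Or.inr (Or.inl rfl)
        · exact Or.inr (Or.inr ((bklt_cons ..).2 (Or.inr ⟨rfl, h⟩)))
      · exact Or.inr (Or.inr ((bklt_cons ..).2 (Or.inl h)))

lemma bklt_asymm {s t : List ℕ} (h : BKlt s t) : ¬ BKlt t s :=
  fun h' => bklt_irrefl s (bklt_trans s t s h h')

lemma bklt_append : ∀ (b : List ℕ), b ≠ [] → ∀ x l, BKlt (b ++ x :: l) b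
  | [], h => absurd rfl h
  | c :: b', _ => by
      intro x l
      rw [List.cons_append, bklt_cons]
      refine Or.inr ⟨rfl, ?_⟩
      rcases eq_or_ne b' [] with rfl | h
      · exact bklt_cons_nil x l
      · exact bklt_append b' h x l

lemma bklt_step : ∀ (b a : List ℕ) (k : ℕ), BKlt a b →
    (∀ j rest, a = b ++ j :: rest → j < k) → BKlt a (b ++ [k])
  | [], a, k => by
      intro h hk
      cases a with
      | nil => exact absurd h (bklt_nil _)
      | cons x s =>
          rw [List.nil_append, bklt_cons]
          exact Or.inl (hk x s rfl)
  | c :: b', a, k => by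
      intro h hk
      cases a with
      | nil => exact absurd h (bklt_nil _)
      | cons x s =>
          rw [bklt_cons] at h
          rw [List.cons_append, bklt_cons]
          rcases h with h | ⟨rfl, h⟩
          · exact Or.inl h
          · exact Or.inr ⟨rfl, bklt_step b' s k h
              (fun j rest hj => hk j rest (by rw [hj, List.cons_append]))⟩

/-! ### Trees -/

lemma tree_prefix {S : Set (List ℕ)} (hS : IsLevel1Tree S) :
    ∀ (u t : List ℕ), t ≠ [] → t ++ u ∈ S → t ∈ S := by
  intro u
  induction u using List.reverseRecOn with
  | nil => intro t ht h; simpa using h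
  | append_singleton u' m ih =>
      intro t ht h
      rw [← List.append_assoc] at h
      exact ih t ht ((hS.2 (t ++ u') m h).1 (by simp [ht]))

lemma concat_inj {s b : List ℕ} {n k : ℕ} (h : s ++ [n] = b ++ [k]) :
    s = b ∧ n = k := by
  have h2 := congrArg List.reverse h
  simp only [List.reverse_append, List.reverse_cons, List.reverse_nil,
    List.nil_append, List.singleton_append, List.cons.injEq] at h2
  exact ⟨by simpa using congrArg List.reverse h2.2, h2.1⟩

lemma insert_tree {S : Set (List ℕ)} (hS : IsLevel1Tree S) (b : List ℕ) (k : ℕ)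
    (hb : b = [] ∨ b ∈ S) (hk : ∀ j < k, b ++ [j] ∈ S) :
    IsLevel1Tree (insert (b ++ [k]) S) := by
  constructor
  · intro s hs
    rcases Set.mem_insert_iff.1 hs with rfl | hs
    · simp
    · exact hS.1 s hs
  · intro s n hsn
    rcases Set.mem_insert_iff.1 hsn with heq | hmem
    · obtain ⟨rfl, rfl⟩ := concat_inj heq
      constructor
      · intro hb'
        rcases hb with rfl | hbs
        · exact absurd rfl hb'
        · exact Set.mem_insert_iff.2 (Or.inr hbs)
      · intro m hm
        exact Set.mem_insert_iff.2 (Or.inr (hk m hm))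
    · obtain ⟨h1, h2⟩ := hS.2 s n hmem
      exact ⟨fun h => Set.mem_insert_iff.2 (Or.inr (h1 h)),
        fun m hm => Set.mem_insert_iff.2 (Or.inr (h2 m hm))⟩

/-! ### The recursive construction -/

section Construction

variable {L : Type} [LinearOrder L]

lemma exists_fresh (b : List ℕ) (prev : ℕ → List ℕ) (n : ℕ) :
    ∃ j : ℕ, ∀ m, m < n → prev m ≠ b ++ [j] := by
  refine ⟨((Finset.range n).sup fun m => (prev m).reverse.headD 0) + 1, ?_⟩
  intro m hm hcontra
  have h1 : (prev m).reverse.headD 0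
      = ((Finset.range n).sup fun m => (prev m).reverse.headD 0) + 1 := by
    rw [hcontra]; simp
  have h2 : (prev m).reverse.headD 0
      ≤ (Finset.range n).sup fun m => (prev m).reverse.headD 0 :=
    Finset.le_sup (f := fun m => (prev m).reverse.headD 0) (Finset.mem_range.2 hm)
  omega

lemma exists_min_above (g : ℕ → L) (n : ℕ) (h : ∃ m, m < n ∧ g n < g m) :
    ∃ m, (m < n ∧ g n < g m) ∧ ∀ m', m' < n → g n < g m' → g m ≤ g m' := by
  classical
  obtain ⟨m0, hm0⟩ := h
  set s : Finset L := ((Finset.range n).filter fun m => g n < g m).image g with hs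
  have hne : s.Nonempty :=
    ⟨g m0, Finset.mem_image.2 ⟨m0, Finset.mem_filter.2
      ⟨Finset.mem_range.2 hm0.1, hm0.2⟩, rfl⟩⟩
  obtain ⟨m, hm, hgm⟩ := Finset.mem_image.1 (s.min'_mem hne)
  rw [Finset.mem_filter, Finset.mem_range] at hm
  refine ⟨m, ⟨hm.1, hm.2⟩, fun m' hm' hgt => ?_⟩
  rw [hgm]
  exact s.min'_le _ (Finset.mem_image.2 ⟨m', Finset.mem_filter.2
    ⟨Finset.mem_range.2 hm', hgt⟩, rfl⟩)

open Classical in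
noncomputable def bchoice (g : ℕ → L) (n : ℕ) (prev : ℕ → List ℕ) : List ℕ :=
  if h2 : ∃ m, (m < n ∧ g n < g m) ∧ ∀ m', m' < n → g n < g m' → g m ≤ g m'
  then prev h2.choose else []

open Classical in
noncomputable def step (g : ℕ → L) (n : ℕ) (prev : ℕ → List ℕ) : List ℕ :=
  if h : ∃ m, m < n ∧ g m = g n then prev h.choose
  else bchoice g n prev ++ [Nat.find (exists_fresh (bchoice g n prev) prev n)]

noncomputable def FF (g : ℕ → L) : ℕ → ℕ → List ℕ
  | 0 => fun _ => []
  | n + 1 => fun m => if m = n then step g n (FF g n) else FF g n m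

noncomputable def ff (g : ℕ → L) (n : ℕ) : List ℕ := FF g (n + 1) n

lemma FF_eq (g : ℕ → L) : ∀ n m, m < n → FF g n m = ff g m := by
  intro n
  induction n with
  | zero => intro m hm; omega
  | succ n ih =>
      intro m hm
      rcases Nat.lt_succ_iff_lt_or_eq.mp hm with hm' | rfl
      · have hne : m ≠ n := Nat.ne_of_lt hm'
        show (if m = n then _ else FF g n m) = ff g m
        rw [if_neg hne]
        exact ih m hm'
      · show (if m = m then _ else _) = ff g m
        rw [if_pos rfl]
        show step g m (FF g m) = ff g m
        rw [ff]
        show _ = (if m = m then step g m (FF g m) else FF g m m)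
        rw [if_pos rfl]

lemma ff_succ (g : ℕ → L) (n : ℕ) : ff g n = step g n (FF g n) := by
  show (if n = n then _ else _) = _
  rw [if_pos rfl]

/-- The image after `n` steps. -/
def Pn (g : ℕ → L) (n : ℕ) : Set (List ℕ) := {s | ∃ m, m < n ∧ ff g m = s}

lemma bchoice_spec (g : ℕ → L) (n : ℕ) :
    (bchoice g n (FF g n) = [] ∧ ∀ m, m < n → ¬ g n < g m) ∨
    (∃ m₁, m₁ < n ∧ bchoice g n (FF g n) = ff g m₁ ∧ g n < g m₁ ∧
      ∀ m', m' < n → g n < g m' → g m₁ ≤ g m') := by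
  classical
  by_cases h2 : ∃ m, (m < n ∧ g n < g m) ∧ ∀ m', m' < n → g n < g m' → g m ≤ g m'
  · right
    obtain ⟨⟨hlt, hgt⟩, hmin⟩ := h2.choose_spec
    refine ⟨h2.choose, hlt, ?_, hgt, hmin⟩
    rw [bchoice, dif_pos h2]
    exact FF_eq g n _ hlt
  · left
    constructor
    · rw [bchoice, dif_neg h2]
    · intro m hm hgt
      exact h2 (exists_min_above g n ⟨m, hm, hgt⟩)

lemma step_spec (g : ℕ → L) (n : ℕ) (hne : ¬ ∃ m, m < n ∧ g m = g n) :
    ∃ b k, ff g n = b ++ [k] ∧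
      (∀ m, m < n → ff g m ≠ b ++ [k]) ∧
      (∀ j, j < k → ∃ m, m < n ∧ ff g m = b ++ [j]) ∧
      ((b = [] ∧ ∀ m, m < n → ¬ g n < g m) ∨
       (∃ m₁, m₁ < n ∧ b = ff g m₁ ∧ g n < g m₁ ∧
        ∀ m', m' < n → g n < g m' → g m₁ ≤ g m')) := by
  classical
  refine ⟨bchoice g n (FF g n), Nat.find (exists_fresh (bchoice g n (FF g n)) (FF g n) n),
    ?_, ?_, ?_, ?_⟩
  · rw [ff_succ, step, dif_neg hne]
  · intro m hm
    have := Nat.find_spec (exists_fresh (bchoice g n (FF g n)) (FF g n) n) m hm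
    rwa [FF_eq g n m hm] at this
  · intro j hj
    have := Nat.find_min (exists_fresh (bchoice g n (FF g n)) (FF g n) n) hj
    push_neg at this
    obtain ⟨m, hm, hmeq⟩ := this
    exact ⟨m, hm, by rw [← FF_eq g n m hm]; exact hmeq⟩
  · exact bchoice_spec g n

lemma inv (g : ℕ → L) : ∀ n : ℕ,
    (∀ i, i < n → ∀ j, j < n →
      (g i < g j → BKlt (ff g i) (ff g j)) ∧ (g i = g j → ff g i = ff g j)) ∧
    IsLevel1Tree (Pn g n) := by
  intro n
  induction n with
  | zero =>
      refine ⟨fun i hi => absurd hi (by omega), ?_, ?_⟩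
      · rintro s ⟨m, hm, -⟩; omega
      · rintro s k ⟨m, hm, -⟩; omega
  | succ n ih =>
      have main : (∀ i, i < n →
          (g i < g n → BKlt (ff g i) (ff g n)) ∧
          (g n < g i → BKlt (ff g n) (ff g i)) ∧
          (g i = g n → ff g i = ff g n)) ∧
          IsLevel1Tree (Pn g (n + 1)) := by
        by_cases h : ∃ m, m < n ∧ g m = g n
        · -- repeated value
          obtain ⟨hm₀lt, hm₀eq⟩ := h.choose_spec
          have hfn : ff g n = ff g h.choose := by
            rw [ff_succ, step, dif_pos h]
            exact FF_eq g n _ hm₀lt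
          constructor
          · intro i hi
            refine ⟨?_, ?_, ?_⟩
            · intro hlt
              rw [hfn]
              exact (ih.1 i hi h.choose hm₀lt).1 (by rwa [hm₀eq])
            · intro hlt
              rw [hfn]
              exact (ih.1 h.choose hm₀lt i hi).1 (by rwa [hm₀eq])
            · intro heq
              rw [hfn]
              exact (ih.1 i hi h.choose hm₀lt).2 (by rw [hm₀eq, heq])
          · have hPeq : Pn g (n + 1) = Pn g n := by
              ext s
              constructor
              · rintro ⟨m, hm, rfl⟩
                rcases Nat.lt_succ_iff_lt_or_eq.mp hm with hm' | rfl
                · exact ⟨m, hm', rfl⟩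
                · exact ⟨h.choose, hm₀lt, hfn.symm⟩
              · rintro ⟨m, hm, rfl⟩
                exact ⟨m, Nat.lt_succ_of_lt hm, rfl⟩
            rw [hPeq]
            exact ih.2
        · -- new value
          obtain ⟨b, k, hfn, hfresh, hlow, hb⟩ := step_spec g n h
          have hbS : b = [] ∨ b ∈ Pn g n := by
            rcases hb with ⟨rfl, -⟩ | ⟨m₁, hm₁, rfl, -, -⟩
            · exact Or.inl rfl
            · exact Or.inr ⟨m₁, hm₁, rfl⟩
          have hbne : b ∈ Pn g n → b ≠ [] := fun hmem => ih.2.1 b hmem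
          -- key comparison with elements below
          have hkey_below : ∀ i, i < n → g i < g n → BKlt (ff g i) (ff g n) := by
            intro i hi hlt
            rw [hfn]
            have hib : BKlt (ff g i) b := by
              rcases hb with ⟨rfl, -⟩ | ⟨m₁, hm₁, rfl, hgt, -⟩
              · exact bklt_nil_right (ih.2.1 _ ⟨i, hi, rfl⟩)
              · exact (ih.1 i hi m₁ hm₁).1 (lt_trans hlt hgt)
            refine bklt_step b (ff g i) k hib ?_
            intro j rest hj
            have hjmem : b ++ [j] ∈ Pn g n := by
              apply tree_prefix ih.2 rest (b ++ [j]) (by simp)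
              rw [List.append_assoc, List.singleton_append, ← hj]
              exact ⟨i, hi, rfl⟩
            by_contra hjk
            push_neg at hjk
            rcases Nat.lt_or_ge k j with hkj | hkj
            · obtain ⟨m, hm, hmeq⟩ := hjmem
              have := (ih.2.2 b j ⟨m, hm, hmeq⟩).2 k hkj
              obtain ⟨m', hm', hmeq'⟩ := this
              exact hfresh m' hm' hmeq'
            · have : j = k := le_antisymm hkj hjk
              subst this
              obtain ⟨m, hm, hmeq⟩ := hjmem
              exact hfresh m hm hmeq
          have hkey_above : ∀ i, i < n → g n < g i → BKlt (ff g n) (ff g i) := by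
            intro i hi hlt
            rcases hb with ⟨-, habove⟩ | ⟨m₁, hm₁, hbeq, hgt, hmin⟩
            · exact absurd hlt (habove i hi)
            · have hbne' : b ≠ [] := hbne (⟨m₁, hm₁, hbeq.symm⟩)
              have hqb : BKlt (ff g n) b := by
                rw [hfn]
                exact bklt_append b hbne' k []
              rcases lt_or_eq_of_le (hmin i hi hlt) with h1 | h1
              · exact bklt_trans _ _ _ hqb (hbeq ▸ (ih.1 m₁ hm₁ i hi).1 h1)
              · rw [← (ih.1 m₁ hm₁ i hi).2 h1, ← hbeq]
                exact hqb
          constructor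
          · intro i hi
            exact ⟨hkey_below i hi, hkey_above i hi,
              fun heq => absurd ⟨i, hi, heq⟩ h⟩
          · have hPeq : Pn g (n + 1) = insert (b ++ [k]) (Pn g n) := by
              ext s
              constructor
              · rintro ⟨m, hm, rfl⟩
                rcases Nat.lt_succ_iff_lt_or_eq.mp hm with hm' | rfl
                · exact Set.mem_insert_iff.2 (Or.inr ⟨m, hm', rfl⟩)
                · exact Set.mem_insert_iff.2 (Or.inl hfn)
              · intro hs
                rcases Set.mem_insert_iff.1 hs with rfl | ⟨m, hm, rfl⟩
                · exact ⟨n, Nat.lt_succ_self n, hfn⟩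
                · exact ⟨m, Nat.lt_succ_of_lt hm, rfl⟩
            rw [hPeq]
            exact insert_tree ih.2 b k hbS (fun j hj => hlow j hj)
      refine ⟨?_, main.2⟩
      intro i hi j hj
      rcases Nat.lt_succ_iff_lt_or_eq.mp hi with hi' | rfl <;>
        rcases Nat.lt_succ_iff_lt_or_eq.mp hj with hj' | hj'
      · exact ih.1 i hi' j hj'
      · subst hj'
        exact ⟨(main.1 i hi').1, (main.1 i hi').2.2⟩
      · exact ⟨(main.1 j hj').2.1, fun he => ((main.1 j hj').2.2 he.symm).symm⟩
      · subst hj'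
        exact ⟨fun hlt => absurd hlt (lt_irrefl _), fun _ => rfl⟩

end Construction

end Stmt3Aux

/-- Every countable linear order is order-isomorphic to `(P, <_BK)`
for some level-1 tree `P`. -/
theorem stmt3 (L : Type) [LinearOrder L] [Countable L] :
    ∃ P : Set (List ℕ), IsLevel1Tree P ∧
      Nonempty ((fun a b : L => a < b) ≃r fun s t : {s // s ∈ P} => BKlt s.1 t.1) := by
  classical
  open Stmt3Aux in
  rcases isEmpty_or_nonempty L with hL | hL
  · refine ⟨∅, ⟨fun s hs => absurd hs (Set.notMem_empty s),
      fun s n hs => absurd hs (Set.notMem_empty _)⟩, ?_⟩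
    have hE : IsEmpty {s // s ∈ (∅ : Set (List ℕ))} :=
      ⟨fun x => absurd x.2 (Set.notMem_empty x.1)⟩
    exact ⟨⟨Equiv.equivOfIsEmpty L {s // s ∈ (∅ : Set (List ℕ))},
      fun {a b} => isEmptyElim a⟩⟩
  · obtain ⟨g, hg⟩ := exists_surjective_nat L
    set P : Set (List ℕ) := {s | ∃ m, ff g m = s} with hP
    have hmono : ∀ i j : ℕ, g i < g j → BKlt (ff g i) (ff g j) := by
      intro i j hij
      exact ((inv g (max i j + 1)).1 i (by omega) j (by omega)).1 hij
    have heqf : ∀ i j : ℕ, g i = g j → ff g i = ff g j := by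
      intro i j hij
      exact ((inv g (max i j + 1)).1 i (by omega) j (by omega)).2 hij
    have hiff : ∀ i j : ℕ, BKlt (ff g i) (ff g j) ↔ g i < g j := by
      intro i j
      constructor
      · intro hbk
        rcases lt_trichotomy (g i) (g j) with h | h | h
        · exact h
        · exact absurd hbk (heqf i j h ▸ bklt_irrefl _)
        · exact absurd hbk (bklt_asymm (hmono j i h))
      · exact hmono i j
    have htree : IsLevel1Tree P := by
      constructor
      · rintro s ⟨m, rfl⟩
        exact (inv g (m + 1)).2.1 _ ⟨m, Nat.lt_succ_self m, rfl⟩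
      · rintro s n ⟨m, hm⟩
        have hmem : s ++ [n] ∈ Pn g (m + 1) := ⟨m, Nat.lt_succ_self m, hm⟩
        obtain ⟨h1, h2⟩ := (inv g (m + 1)).2.2 s n hmem
        constructor
        · intro hs
          obtain ⟨m', -, hm'⟩ := h1 hs
          exact ⟨m', hm'⟩
        · intro j hj
          obtain ⟨m', -, hm'⟩ := h2 j hj
          exact ⟨m', hm'⟩
    -- the isomorphism
    have hgc : ∀ y : L, g (hg y).choose = y := fun y => (hg y).choose_spec
    set e : L → {s // s ∈ P} := fun y => ⟨ff g (hg y).choose, ⟨_, rfl⟩⟩ with he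
    have hekey : ∀ (y y' : L), BKlt (e y).1 (e y').1 ↔ y < y' := by
      intro y y'
      rw [he]
      simp only
      rw [hiff, hgc, hgc]
    have hinj : Function.Injective e := by
      intro y y' hyy
      rcases lt_trichotomy y y' with h | h | h
      · have := (hekey y y').2 h
        rw [hyy] at this
        exact absurd this (bklt_irrefl _)
      · exact h
      · have := (hekey y' y).2 h
        rw [hyy] at this
        exact absurd this (bklt_irrefl _)
    have hsurj : Function.Surjective e := by
      rintro ⟨s, m, rfl⟩
      refine ⟨g m, ?_⟩
      apply Subtype.ext
      exact heqf _ _ (hgc (g m))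
    exact ⟨P, htree, ⟨⟨Equiv.ofBijective e ⟨hinj, hsurj⟩,
      fun {a b} => hekey a b⟩⟩⟩
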